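/- Let C₀ ⊆ ℝⁿ be the convex cone generated with nonnegative real coefficients by a finite subset of ℤⁿ, let S⁺, S⁻ ⊆ ℤⁿ be finite nonempty sets, and set Δ⁺ := convexHull ℝ S⁺ + C₀ and Δ⁻ := convexHull ℝ S⁻ + C₀ (Minkowski sums). Assume Δ⁺ ⊆ Δ⁻. Then for every connected component C of Δ⁻ \ Δ⁺ there exists a finite set S ⊆ ℤⁿ such that C ∪ Δ⁺ = convexHull ℝ S + C₀. In other words, the union of Δ⁺ with any connected component of Δ⁻ \ Δ⁺ is again a lattice polyhedron with tail cone C₀. -/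

import Mathlib

open Pointwise

/-- The canonical inclusion of the standard lattice `ℤⁿ` into `ℝⁿ`. -/
def intVec {n : ℕ} (v : Fin n → ℤ) : Fin n → ℝ := fun i => (v i : ℝ)

/-- The convex cone generated with nonnegative real coefficients by the finite set
`G` of lattice points of `ℤⁿ`. -/
def latticeCone {n : ℕ} (G : Finset (Fin n → ℤ)) : Set (Fin n → ℝ) :=
  {x | ∃ c : (Fin n → ℤ) → ℝ, (∀ g, 0 ≤ c g) ∧ x = ∑ g ∈ G, c g • intVec g}

namespace LatticeAux
variable {n : ℕ}


variable {n : ℕ}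

lemma zero_mem_latticeCone (G : Finset (Fin n → ℤ)) : (0 : Fin n → ℝ) ∈ latticeCone G :=
  ⟨0, fun _ => le_rfl, by simp⟩

lemma latticeCone_add {G : Finset (Fin n → ℤ)} {a b : Fin n → ℝ}
    (ha : a ∈ latticeCone G) (hb : b ∈ latticeCone G) : a + b ∈ latticeCone G := by
  obtain ⟨c, hc, rfl⟩ := ha
  obtain ⟨d, hd, rfl⟩ := hb
  exact ⟨c + d, fun g => add_nonneg (hc g) (hd g), by
    simp [add_smul, Finset.sum_add_distrib]⟩

lemma latticeCone_smul {G : Finset (Fin n → ℤ)} {a : Fin n → ℝ} {t : ℝ}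
    (ht : 0 ≤ t) (ha : a ∈ latticeCone G) : t • a ∈ latticeCone G := by
  obtain ⟨c, hc, rfl⟩ := ha
  exact ⟨fun g => t * c g, fun g => mul_nonneg ht (hc g), by
    simp [Finset.smul_sum, smul_smul]⟩

lemma latticeCone_convex (G : Finset (Fin n → ℤ)) : Convex ℝ (latticeCone G) := by
  intro a ha b hb s t hs ht _
  exact latticeCone_add (latticeCone_smul hs ha) (latticeCone_smul ht hb)

lemma latticeCone_mono {F G : Finset (Fin n → ℤ)} (h : F ⊆ G) :
    latticeCone F ⊆ latticeCone G := by
  classical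
  rintro x ⟨c, hc, rfl⟩
  refine ⟨fun g => if g ∈ F then c g else 0, fun g => by by_cases hg : g ∈ F <;> simp [hg, hc g], ?_⟩
  rw [← Finset.sum_subset h]
  · exact Finset.sum_congr rfl fun g hg => by simp [hg]
  · intro g _ hg; simp [hg]


variable {n : ℕ}

lemma caratheodory (G : Finset (Fin n → ℤ)) :
    ∀ x ∈ latticeCone G, ∃ F : Finset (Fin n → ℤ), F ⊆ G ∧
      LinearIndependent ℝ (fun g : F => intVec (g : Fin n → ℤ)) ∧ x ∈ latticeCone F := by
  classical
  induction G using Finset.strongInduction with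
  | _ G ih =>
    intro x hx
    by_cases hli : LinearIndependent ℝ (fun g : G => intVec (g : Fin n → ℤ))
    · exact ⟨G, subset_rfl, hli, hx⟩
    · obtain ⟨c, hc, rfl⟩ := hx
      obtain ⟨d, hd0, i, hdi⟩ := Fintype.not_linearIndependent_iff.1 hli
      -- make sure some coefficient is positive
      obtain ⟨d, hd0, i, hdi⟩ :
          ∃ d : G → ℝ, ∑ j : G, d j • intVec (j : Fin n → ℤ) = 0 ∧ ∃ i : G, 0 < d i := by
        rcases lt_or_gt_of_ne hdi with h | h
        · exact ⟨-d, by simpa using hd0, i, by simpa using h⟩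
        · exact ⟨d, hd0, i, h⟩
      set P : Finset G := Finset.univ.filter fun j => 0 < d j with hP
      have hPne : P.Nonempty := ⟨i, by simp [hP, hdi]⟩
      obtain ⟨i₀, hi₀P, hi₀min⟩ := P.exists_min_image (fun j => c (j : Fin n → ℤ) / d j) hPne
      have hdi₀ : 0 < d i₀ := by simpa [hP] using hi₀P
      set t : ℝ := c (i₀ : Fin n → ℤ) / d i₀ with ht
      have ht0 : 0 ≤ t := div_nonneg (hc _) hdi₀.le
      set c' : (Fin n → ℤ) → ℝ := fun g => if h : g ∈ G then c g - t * d ⟨g, h⟩ else 0 with hc'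
      have hc'nn : ∀ g, 0 ≤ c' g := by
        intro g
        by_cases hg : g ∈ G
        · simp only [hc', dif_pos hg]
          rcases le_or_gt (d ⟨g, hg⟩) 0 with h | h
          · have : t * d ⟨g, hg⟩ ≤ 0 := mul_nonpos_of_nonneg_of_nonpos ht0 h
            linarith [hc g]
          · have hmem : (⟨g, hg⟩ : G) ∈ P := by simp [hP, h]
            have h2 := hi₀min _ hmem
            have h3 : t * d ⟨g, hg⟩ ≤ c g := by
              rw [div_le_div_iff₀ hdi₀ h] at h2
              rw [ht, div_mul_eq_mul_div, div_le_iff₀ hdi₀]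
              simpa [mul_comm] using h2
            linarith
        · simp [hc', hg]
      have hc'i₀ : c' (i₀ : Fin n → ℤ) = 0 := by
        simp only [hc', dif_pos i₀.2, Subtype.coe_eta]
        rw [ht]
        field_simp
        simp
      have hsum : ∑ g ∈ G, c g • intVec g = ∑ g ∈ G, c' g • intVec g := by
        rw [← Finset.sum_attach G fun g => c g • intVec g,
            ← Finset.sum_attach G fun g => c' g • intVec g]
        have : ∀ j : G, c' (j : Fin n → ℤ) • intVec (j : Fin n → ℤ)
            = c (j : Fin n → ℤ) • intVec (j : Fin n → ℤ) - (t * d j) • intVec (j : Fin n → ℤ) := by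
          intro j
          simp only [hc', dif_pos j.2, Subtype.coe_eta, sub_smul]
        rw [Finset.sum_congr rfl fun j _ => this j, Finset.sum_sub_distrib]
        have huniv : (Finset.univ : Finset {x // x ∈ G}) = G.attach := rfl
        have : ∑ j ∈ G.attach, (t * d j) • intVec (j : Fin n → ℤ)
            = t • ∑ j ∈ G.attach, d j • intVec (j : Fin n → ℤ) := by
          rw [Finset.smul_sum]; exact Finset.sum_congr rfl fun j _ => by rw [smul_smul]
        rw [this, ← huniv, hd0, smul_zero, sub_zero]
      have hxerase : ∑ g ∈ G, c g • intVec g ∈ latticeCone (G.erase (i₀ : Fin n → ℤ)) := by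
        refine ⟨c', hc'nn, ?_⟩
        rw [hsum, Finset.sum_erase]
        rw [hc'i₀, zero_smul]
      obtain ⟨F, hFsub, hFli, hxF⟩ := ih _ (Finset.erase_ssubset i₀.2) _ hxerase
      exact ⟨F, hFsub.trans (Finset.erase_subset _ _), hFli, hxF⟩

variable {n : ℕ}

lemma isClosed_latticeCone_of_li {F : Finset (Fin n → ℤ)}
    (hli : LinearIndependent ℝ (fun g : F => intVec (g : Fin n → ℤ))) :
    IsClosed (latticeCone F) := by
  classical
  set T : ({x // x ∈ F} → ℝ) →ₗ[ℝ] (Fin n → ℝ) :=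
    { toFun := fun c => ∑ j ∈ F.attach, c j • intVec (j : Fin n → ℤ)
      map_add' := by
        intro a b
        simp [add_smul, Finset.sum_add_distrib]
      map_smul' := by
        intro m a
        simp [Finset.smul_sum, smul_smul] } with hT
  have hker : LinearMap.ker T = ⊥ := by
    rw [LinearMap.ker_eq_bot']
    intro c hc
    have huniv : (Finset.univ : Finset {x // x ∈ F}) = F.attach := rfl
    refine funext (Fintype.linearIndependent_iff.1 hli c ?_)
    rw [huniv]
    exact hc
  have hemb := LinearMap.isClosedEmbedding_of_injective hker
  have him : latticeCone F = T '' {c | ∀ j, 0 ≤ c j} := by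
    ext y
    constructor
    · rintro ⟨c, hc, rfl⟩
      refine ⟨fun j => c (j : Fin n → ℤ), fun j => hc _, ?_⟩
      simp only [hT, LinearMap.coe_mk, AddHom.coe_mk]
      rw [← Finset.sum_attach F fun g => c g • intVec g]
    · rintro ⟨c, hc, rfl⟩
      refine ⟨fun g => if h : g ∈ F then c ⟨g, h⟩ else 0, fun g => ?_, ?_⟩
      · by_cases h : g ∈ F <;> simp [h, hc _]
      · simp only [hT, LinearMap.coe_mk, AddHom.coe_mk]
        rw [← Finset.sum_attach F fun g =>
          (if h : g ∈ F then c ⟨g, h⟩ else 0) • intVec g]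
        exact (Finset.sum_congr rfl fun j _ => by simp [j.2]).symm
  rw [him]
  refine hemb.isClosedMap _ ?_
  have : {c : {x // x ∈ F} → ℝ | ∀ j, 0 ≤ c j} = ⋂ j, {c | 0 ≤ c j} := by
    ext c; simp
  rw [this]
  exact isClosed_iInter fun j => isClosed_le continuous_const (continuous_apply j)

lemma isClosed_latticeCone (G : Finset (Fin n → ℤ)) : IsClosed (latticeCone G) := by
  classical
  have : latticeCone G = ⋃ F ∈ (G.powerset.filter fun F : Finset (Fin n → ℤ) =>
      LinearIndependent ℝ (fun g : {x // x ∈ F} => intVec (g : Fin n → ℤ))), latticeCone F := by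
    ext y
    simp only [Set.mem_iUnion, Finset.mem_filter, Finset.mem_powerset]
    constructor
    · intro hy
      obtain ⟨F, hFG, hli, hyF⟩ := caratheodory G y hy
      exact ⟨F, ⟨hFG, hli⟩, hyF⟩
    · rintro ⟨F, ⟨hFG, _⟩, hyF⟩
      exact latticeCone_mono hFG hyF
  rw [this]
  exact (Set.Finite.isClosed_biUnion (Finset.finite_toSet _)
    fun F hF => isClosed_latticeCone_of_li (Finset.mem_filter.1 hF).2)

variable {n : ℕ}

lemma ray_mem_component {F : Set (Fin n → ℝ)} {u w : Fin n → ℝ} {a b : ℝ} (hab : a ≤ b)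
    (h : ∀ t ∈ Set.Icc a b, u + t • w ∈ F) {z : Fin n → ℝ}
    (hz : u + a • w ∈ connectedComponentIn F z ∨ u + b • w ∈ connectedComponentIn F z) :
    ∀ t ∈ Set.Icc a b, u + t • w ∈ connectedComponentIn F z := by
  intro t ht
  have hcont : Continuous fun s : ℝ => u + s • w :=
    continuous_const.add (continuous_id.smul continuous_const)
  have himg : IsPreconnected ((fun s : ℝ => u + s • w) '' Set.Icc a b) :=
    isPreconnected_Icc.image _ hcont.continuousOn
  have hsubF : ((fun s : ℝ => u + s • w) '' Set.Icc a b) ⊆ F := by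
    rintro y ⟨s, hs, rfl⟩; exact h s hs
  rcases hz with hz | hz
  · rw [connectedComponentIn_eq hz]
    exact himg.subset_connectedComponentIn ⟨a, Set.left_mem_Icc.2 hab, rfl⟩ hsubF ⟨t, ht, rfl⟩
  · rw [connectedComponentIn_eq hz]
    exact himg.subset_connectedComponentIn ⟨b, Set.right_mem_Icc.2 hab, rfl⟩ hsubF ⟨t, ht, rfl⟩


end LatticeAux

open LatticeAux

/-- Let `C₀ ⊆ ℝⁿ` be the convex cone generated with nonnegative real coefficients by a finite
subset `G` of `ℤⁿ`, let `S⁺, S⁻ ⊆ ℤⁿ` be finite nonempty sets, and set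
`Δ⁺ := convexHull ℝ S⁺ + C₀` and `Δ⁻ := convexHull ℝ S⁻ + C₀` (Minkowski sums).
Assume `Δ⁺ ⊆ Δ⁻`.  Then for every connected component `C` of `Δ⁻ \ Δ⁺` there exists a
finite set `S ⊆ ℤⁿ` with `C ∪ Δ⁺ = convexHull ℝ S + C₀`, i.e. the union of `Δ⁺` with any
connected component of `Δ⁻ \ Δ⁺` is again a lattice polyhedron with tail cone `C₀`.
(General case of Proposition 13 of the paper.) -/
theorem union_component_is_lattice_polyhedron {n : ℕ} (G Sp Sm : Finset (Fin n → ℤ))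
    (hSp : Sp.Nonempty) (hSm : Sm.Nonempty)
    (Δp Δm : Set (Fin n → ℝ))
    (hΔp : Δp = convexHull ℝ (intVec '' ↑Sp) + latticeCone G)
    (hΔm : Δm = convexHull ℝ (intVec '' ↑Sm) + latticeCone G)
    (hsub : Δp ⊆ Δm)
    (x : Fin n → ℝ) (hx : x ∈ Δm \ Δp) :
    ∃ S : Finset (Fin n → ℤ),
      connectedComponentIn (Δm \ Δp) x ∪ Δp = convexHull ℝ (intVec '' ↑S) + latticeCone G := by
  classical
  set F : Set (Fin n → ℝ) := Δm \ Δp with hFdef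
  set C : Set (Fin n → ℝ) := connectedComponentIn F x with hCdef
  have hconv_m : Convex ℝ Δm := hΔm ▸ ((convex_convexHull ℝ _).add (latticeCone_convex G))
  have hconv_p : Convex ℝ Δp := hΔp ▸ ((convex_convexHull ℝ _).add (latticeCone_convex G))
  have hclosed_p : IsClosed Δp := hΔp ▸ ((isClosed_latticeCone G).add_left_of_isCompact
      (((Sp : Set (Fin n → ℤ)).toFinite.image _).isCompact_convexHull ℝ))
  have hclosed_m : IsClosed Δm := hΔm ▸ ((isClosed_latticeCone G).add_left_of_isCompact
      (((Sm : Set (Fin n → ℤ)).toFinite.image _).isCompact_convexHull ℝ))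
  have habs_p : ∀ y ∈ Δp, ∀ c ∈ latticeCone G, y + c ∈ Δp := by
    intro y hy c hc
    rw [hΔp] at hy ⊢
    obtain ⟨h, hh, c₀, hc₀, rfl⟩ := Set.mem_add.1 hy
    exact Set.mem_add.2 ⟨h, hh, c₀ + c, latticeCone_add hc₀ hc, (add_assoc _ _ _).symm⟩
  have habs_m : ∀ y ∈ Δm, ∀ c ∈ latticeCone G, y + c ∈ Δm := by
    intro y hy c hc
    rw [hΔm] at hy ⊢
    obtain ⟨h, hh, c₀, hc₀, rfl⟩ := Set.mem_add.1 hy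
    exact Set.mem_add.2 ⟨h, hh, c₀ + c, latticeCone_add hc₀ hc, (add_assoc _ _ _).symm⟩
  have hCF : C ⊆ F := connectedComponentIn_subset F x
  have hxC : x ∈ C := mem_connectedComponentIn hx
  -- Convexity of C ∪ Δp
  have hKconv : Convex ℝ (C ∪ Δp) := by
    rintro u hu v hv a b ha hb hab
    have hum : u ∈ Δm := hu.elim (fun h => (hCF h).1) (fun h => hsub h)
    have hvm : v ∈ Δm := hv.elim (fun h => (hCF h).1) (fun h => hsub h)
    by_cases hwp : a • u + b • v ∈ Δp
    · exact Or.inr hwp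
    have hb1 : b ≤ 1 := by linarith
    have ha1 : a = 1 - b := by linarith
    subst ha1
    set φ : ℝ → (Fin n → ℝ) := fun t => u + t • (v - u) with hφ
    have hφb : (1 - b) • u + b • v = φ b := by rw [hφ]; module
    have hφ0 : φ 0 = u := by rw [hφ]; simp
    have hφ1 : φ 1 = v := by rw [hφ]; module
    have hφm : ∀ t ∈ Set.Icc (0:ℝ) 1, φ t ∈ Δm := by
      intro t ht
      have heq : φ t = (1 - t) • u + t • v := by rw [hφ]; module
      rw [heq]
      exact hconv_m hum hvm (by linarith [ht.2]) ht.1 (by ring)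
    have hAconv : Convex ℝ {t : ℝ | φ t ∈ Δp} := by
      intro t₁ h₁ t₂ h₂ θ₁ θ₂ hθ₁ hθ₂ hθ
      have hθ' : θ₂ = 1 - θ₁ := by linarith
      subst hθ'
      have hid : φ (θ₁ • t₁ + (1 - θ₁) • t₂) = θ₁ • φ t₁ + (1 - θ₁) • φ t₂ := by
        rw [hφ]; simp only [smul_eq_mul]; module
      show φ (θ₁ • t₁ + (1 - θ₁) • t₂) ∈ Δp
      rw [hid]
      exact hconv_p h₁ h₂ hθ₁ (by linarith) (by ring)
    have hOrd := hAconv.ordConnected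
    rw [hφb]
    rw [hφb] at hwp
    left
    rcases hu with huC | huP
    · rcases hv with hvC | hvP
      · by_cases hex : ∃ t ∈ Set.Icc (0:ℝ) b, φ t ∈ Δp
        · obtain ⟨t₀, ht₀, hpt₀⟩ := hex
          have htail : ∀ t ∈ Set.Icc b 1, u + t • (v - u) ∈ F := by
            intro t ht
            refine ⟨hφm t ⟨le_trans hb ht.1, ht.2⟩, fun hP => hwp ?_⟩
            exact hOrd.out hpt₀ hP ⟨ht₀.2, ht.1⟩
          have := ray_mem_component hb1 htail (z := x)
            (Or.inr (by show φ 1 ∈ _; rw [hφ1]; exact hvC)) b ⟨le_rfl, hb1⟩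
          exact this
        · push_neg at hex
          have hhead : ∀ t ∈ Set.Icc (0:ℝ) b, u + t • (v - u) ∈ F := by
            intro t ht
            exact ⟨hφm t ⟨ht.1, le_trans ht.2 hb1⟩, hex t ht⟩
          have := ray_mem_component hb hhead (z := x)
            (Or.inl (by show φ 0 ∈ _; rw [hφ0]; exact huC)) b ⟨hb, le_rfl⟩
          exact this
      · -- u ∈ C, v ∈ Δp
        have hhead : ∀ t ∈ Set.Icc (0:ℝ) b, u + t • (v - u) ∈ F := by
          intro t ht
          refine ⟨hφm t ⟨ht.1, le_trans ht.2 hb1⟩, fun hP => hwp ?_⟩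
          have h1A : φ 1 ∈ Δp := by rw [hφ1]; exact hvP
          exact hOrd.out hP h1A ⟨ht.2, hb1⟩
        exact ray_mem_component hb hhead (z := x)
          (Or.inl (by show φ 0 ∈ _; rw [hφ0]; exact huC)) b ⟨hb, le_rfl⟩
    · rcases hv with hvC | hvP
      · -- u ∈ Δp, v ∈ C
        have htail : ∀ t ∈ Set.Icc b 1, u + t • (v - u) ∈ F := by
          intro t ht
          refine ⟨hφm t ⟨le_trans hb ht.1, ht.2⟩, fun hP => hwp ?_⟩
          have h0A : φ 0 ∈ Δp := by rw [hφ0]; exact huP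
          exact hOrd.out h0A hP ⟨hb, ht.1⟩
        exact ray_mem_component hb1 htail (z := x)
          (Or.inr (by show φ 1 ∈ _; rw [hφ1]; exact hvC)) b ⟨le_rfl, hb1⟩
      · exact absurd (hφb ▸ hconv_p huP hvP (by linarith) hb (by ring)) hwp
  -- C ∪ Δp absorbs latticeCone G
  have hKadd : ∀ y ∈ C ∪ Δp, ∀ c ∈ latticeCone G, y + c ∈ C ∪ Δp := by
    rintro y (hyC | hyP) c hc
    · by_cases hyc : y + c ∈ Δp
      · exact Or.inr hyc
      left
      have hstep : ∀ t ∈ Set.Icc (0:ℝ) 1, y + t • c ∈ F := by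
        intro t ht
        refine ⟨habs_m _ (hCF hyC).1 _ (latticeCone_smul ht.1 hc), fun hP => hyc ?_⟩
        have heq : y + c = (y + t • c) + (1 - t) • c := by module
        rw [heq]
        exact habs_p _ hP _ (latticeCone_smul (by linarith [ht.2]) hc)
      have := ray_mem_component zero_le_one hstep (z := x)
        (Or.inl (by simpa using hyC)) 1 ⟨zero_le_one, le_rfl⟩
      simpa using this
    · exact Or.inr (habs_p _ hyP _ hc)
  -- Decomposition of points of C
  have hdecomp : ∀ y ∈ C, ∃ p ∈ convexHull ℝ (intVec '' (Sm : Set (Fin n → ℤ))),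
      ∃ c ∈ latticeCone G, y = p + c ∧ p ∈ C := by
    intro y hy
    have hym : y ∈ Δm := (hCF hy).1
    rw [hΔm] at hym
    obtain ⟨p, hp, c, hc, hpc⟩ := Set.mem_add.1 hym
    have hstep : ∀ t ∈ Set.Icc (0:ℝ) 1, p + t • c ∈ F := by
      intro t ht
      constructor
      · rw [hΔm]; exact Set.mem_add.2 ⟨p, hp, t • c, latticeCone_smul ht.1 hc, rfl⟩
      · intro hP
        have hyP : y ∈ Δp := by
          have heq : y = (p + t • c) + (1 - t) • c := by rw [← hpc]; module
          rw [heq]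
          exact habs_p _ hP _ (latticeCone_smul (by linarith [ht.2]) hc)
        exact (hCF hy).2 hyP
    have hpC : p ∈ C := by
      have := ray_mem_component zero_le_one hstep (z := x)
        (Or.inr (by simpa [hpc] using hy)) 0 ⟨le_rfl, zero_le_one⟩
      simpa using this
    exact ⟨p, hp, c, hc, hpc.symm, hpC⟩
  -- Closedness of C ∪ Δp
  have hKclosed : IsClosed (C ∪ Δp) := by
    refine isClosed_of_closure_subset ?_
    intro z hz
    rw [closure_union] at hz
    rcases hz with hzC | hzP
    · have hzm : z ∈ Δm :=
        hclosed_m.closure_subset (closure_mono (fun w hw => (hCF hw).1) hzC)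
      by_cases hzp : z ∈ Δp
      · exact Or.inr hzp
      left
      have hzF : z ∈ F := ⟨hzm, hzp⟩
      rw [hCdef, connectedComponentIn_eq_image hx] at hzC ⊢
      refine ⟨⟨z, hzF⟩, ?_, rfl⟩
      have hmem : (⟨z, hzF⟩ : F) ∈ closure (connectedComponent (⟨x, hx⟩ : F)) :=
        closure_subtype.2 hzC
      exact isClosed_connectedComponent.closure_subset hmem
    · exact Or.inr (hclosed_p.closure_subset hzP)
  -- the candidate vertex set
  set Sf : Finset (Fin n → ℤ) := Sp ∪ Sm.filter (fun s => intVec s ∈ C) with hSf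
  refine ⟨Sf, ?_⟩
  set Q : Set (Fin n → ℝ) := convexHull ℝ (intVec '' ↑Sf) + latticeCone G with hQ
  have hQconv : Convex ℝ Q := (convex_convexHull ℝ _).add (latticeCone_convex G)
  have hQclosed : IsClosed Q := (isClosed_latticeCone G).add_left_of_isCompact
      (((Sf : Set (Fin n → ℤ)).toFinite.image _).isCompact_convexHull ℝ)
  have hQadd : ∀ q ∈ Q, ∀ c ∈ latticeCone G, q + c ∈ Q := by
    intro q hq c hc
    obtain ⟨h, hh, c₀, hc₀, rfl⟩ := Set.mem_add.1 hq
    exact Set.mem_add.2 ⟨h, hh, c₀ + c, latticeCone_add hc₀ hc, (add_assoc _ _ _).symm⟩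
  have hAK : intVec '' (Sf : Set (Fin n → ℤ)) ⊆ C ∪ Δp := by
    rintro - ⟨s, hs, rfl⟩
    rw [Finset.coe_union, Set.mem_union] at hs
    rcases hs with hs | hs
    · refine Or.inr ?_
      rw [hΔp]
      exact Set.mem_add.2 ⟨intVec s, subset_convexHull ℝ _ (Set.mem_image_of_mem _ hs),
        0, zero_mem_latticeCone G, add_zero _⟩
    · rw [Finset.mem_coe, Finset.mem_filter] at hs
      exact Or.inl hs.2
  have hQK : Q ⊆ C ∪ Δp := by
    intro q hq
    obtain ⟨h, hh, c, hc, rfl⟩ := Set.mem_add.1 hq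
    exact hKadd _ (convexHull_min hAK hKconv hh) _ hc
  have hPQ : Δp ⊆ Q := by
    rw [hΔp, hQ]
    refine Set.add_subset_add_right (convexHull_mono (Set.image_mono ?_))
    exact_mod_cast Finset.subset_union_left
  have hSmm : convexHull ℝ (intVec '' (Sm : Set (Fin n → ℤ))) ⊆ Δm := by
    rw [hΔm]
    intro h hh
    exact Set.mem_add.2 ⟨h, hh, 0, zero_mem_latticeCone G, add_zero h⟩
  -- the key inclusion C ⊆ Q
  have hCQ : C ⊆ Q := by
    intro y hy
    obtain ⟨p, hp, c, hc, rfl, hpC⟩ := hdecomp y hy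
    set K₀ : Set (Fin n → ℝ) := convexHull ℝ (intVec '' (Sm : Set (Fin n → ℤ))) ∩ (C ∪ Δp)
      with hK₀
    have hK₀cpt : IsCompact K₀ :=
      (((Sm : Set (Fin n → ℤ)).toFinite.image _).isCompact_convexHull ℝ).inter_right hKclosed
    have hK₀conv : Convex ℝ K₀ := (convex_convexHull ℝ _).inter hKconv
    have hext : K₀.extremePoints ℝ ⊆ Q := by
      intro v hv
      have hvK₀ := hv.1
      rcases hvK₀.2 with hvC | hvP
      · -- v ∈ C : the local argument
        have hvm : v ∈ convexHull ℝ (intVec '' (Sm : Set (Fin n → ℤ))) := hvK₀.1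
        have hvnp : v ∉ Δp := (hCF hvC).2
        obtain ⟨ε, hε, hball⟩ : ∃ ε > 0, Metric.ball v ε ⊆ Δpᶜ :=
          Metric.mem_nhds_iff.1 (hclosed_p.isOpen_compl.mem_nhds hvnp)
        have hN : convexHull ℝ (intVec '' (Sm : Set (Fin n → ℤ))) ∩ Metric.ball v ε ⊆ C := by
          have hpre : IsPreconnected
              (convexHull ℝ (intVec '' (Sm : Set (Fin n → ℤ))) ∩ Metric.ball v ε) :=
            ((convex_convexHull ℝ _).inter (convex_ball v ε)).isPreconnected
          have hsubF : convexHull ℝ (intVec '' (Sm : Set (Fin n → ℤ))) ∩ Metric.ball v ε ⊆ F :=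
            fun w hw => ⟨hSmm hw.1, hball hw.2⟩
          have hsC := hpre.subset_connectedComponentIn (x := v)
            ⟨hvm, Metric.mem_ball_self hε⟩ hsubF
          rwa [← connectedComponentIn_eq hvC] at hsC
        have hvext : v ∈ (convexHull ℝ (intVec '' (Sm : Set (Fin n → ℤ)))).extremePoints ℝ := by
          refine mem_extremePoints.2 ⟨hvm, ?_⟩
          intro a ha b hb hseg
          obtain ⟨t₁, t₂, ht₁, ht₂, hts, htv⟩ := hseg
          set δ : ℝ := min 1 (ε / (dist a v + dist b v + 1)) with hδ
          have hδ0 : 0 < δ := lt_min one_pos (div_pos hε (by positivity))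
          have hδ1 : δ ≤ 1 := min_le_left _ _
          have hkey : ∀ z, z ∈ convexHull ℝ (intVec '' (Sm : Set (Fin n → ℤ))) →
              dist z v ≤ dist a v + dist b v → v + δ • (z - v) ∈ K₀ := by
            intro z hz hdz
            have hmemc : v + δ • (z - v) ∈ convexHull ℝ (intVec '' (Sm : Set (Fin n → ℤ))) := by
              have heq : v + δ • (z - v) = (1 - δ) • v + δ • z := by module
              rw [heq]
              exact (convex_convexHull ℝ _) hvm hz (by linarith) hδ0.le (by ring)
            refine ⟨hmemc, Or.inl (hN ⟨hmemc, ?_⟩)⟩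
            rw [Metric.mem_ball]
            have hde : dist (v + δ • (z - v)) v = δ * dist z v := by
              rw [dist_eq_norm, dist_eq_norm]
              have : v + δ • (z - v) - v = δ • (z - v) := by module
              rw [this, norm_smul, Real.norm_eq_abs, abs_of_pos hδ0]
            rw [hde]
            calc δ * dist z v ≤ (ε / (dist a v + dist b v + 1)) * dist z v :=
                  mul_le_mul_of_nonneg_right (min_le_right _ _) dist_nonneg
              _ < ε := by
                  rw [div_mul_eq_mul_div, div_lt_iff₀ (by positivity)]
                  nlinarith [@dist_nonneg _ _ z v]
          have haK₀ : v + δ • (a - v) ∈ K₀ :=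
            hkey a ha (by linarith [@dist_nonneg _ _ b v])
          have hbK₀ : v + δ • (b - v) ∈ K₀ :=
            hkey b hb (by linarith [@dist_nonneg _ _ a v])
          have hvseg : v ∈ openSegment ℝ (v + δ • (a - v)) (v + δ • (b - v)) := by
            refine ⟨t₁, t₂, ht₁, ht₂, hts, ?_⟩
            have h1 : t₂ = 1 - t₁ := by linarith
            subst h1
            have h3 : t₁ • (v + δ • (a - v)) + (1 - t₁) • (v + δ • (b - v))
                = v + δ • ((t₁ • a + (1 - t₁) • b) - v) := by module
            rw [h3, htv]
            simp
          obtain ⟨hA', hB'⟩ := (mem_extremePoints.1 hv).2 _ haK₀ _ hbK₀ hvseg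
          constructor
          · exact sub_eq_zero.1 ((smul_eq_zero.1 (add_eq_left.mp hA')).resolve_left hδ0.ne')
          · exact sub_eq_zero.1 ((smul_eq_zero.1 (add_eq_left.mp hB')).resolve_left hδ0.ne')
        obtain ⟨s, hs, hsv⟩ := extremePoints_convexHull_subset hvext
        rw [hQ]
        refine Set.mem_add.2 ⟨v, subset_convexHull ℝ _ ?_, 0, zero_mem_latticeCone G, add_zero _⟩
        refine ⟨s, ?_, hsv⟩
        rw [hSf, Finset.coe_union, Set.mem_union]
        right
        rw [Finset.mem_coe, Finset.mem_filter]
        exact ⟨hs, by rw [hsv]; exact hvC⟩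
      · exact hPQ hvP
    have hKM := closure_convexHull_extremePoints hK₀cpt hK₀conv
    have hpK₀ : p ∈ K₀ := ⟨hp, Or.inl hpC⟩
    have hpQ : p ∈ Q := by
      rw [← hKM] at hpK₀
      exact hQclosed.closure_subset (closure_mono (convexHull_min hext hQconv) hpK₀)
    exact hQadd _ hpQ _ hc
  exact Set.eq_of_subset_of_subset (Set.union_subset hCQ hPQ) hQK
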